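/- Let P be the countable poset constructed as follows. Let L = ℕ ∪ ℕ^{<ℕ} ∪ {⊤} (ℕ with usual order, ℕ^{<ℕ} with prefix order, ⊤ on top), P = ℕ × L, fix pairwise disjoint infinite sets i(m,n) ⊆ ℕ with strict lower bound n for m < n, and monotone bijections f_{m,n} : ℕ^{<ℕ} → i(m,n). Define strict relations <₁,<₂,<₃,<₄ as in the paper and let < be the transitive relation <₁ ∪ <₂ ∪ <₃ ∪ <₄ ∪ <₁;<₂ ∪ <₁;<₃ ∪ <₁;<₄, ≤ = < ∪ =. Then ≤ is a partial order on P and P is irreducible as a subset of its Scott space; that is, any two nonempty Scott open subsets of P intersect. -/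

import Mathlib

/-- Nonempty finite sequences of positive natural numbers. -/
def FinSeq : Type := {l : List ℕ+ // l ≠ []}

/-- The poset `L = ℕ ∪ ℕ^{<ℕ} ∪ {⊤}`: the positive naturals with their usual order,
the nonempty finite sequences with the prefix order, a top element `⊤` above everything,
and no other relations. -/
inductive LL where
  | nat : ℕ+ → LL
  | seq : FinSeq → LL
  | top : LL

/-- The order on `L`. -/
def LL.le : LL → LL → Prop
  | _, .top => True
  | .nat m, .nat n => m ≤ n
  | .seq s, .seq t => s.1 <+: t.1
  | _, _ => False

theorem LL.nat_le_nat (m n : ℕ+) : LL.le (.nat m) (.nat n) ↔ m ≤ n := Iff.rfl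

theorem LL.seq_le_seq (s t : FinSeq) : LL.le (.seq s) (.seq t) ↔ s.1 <+: t.1 := Iff.rfl

instance : PartialOrder LL where
  le := LL.le
  le_refl x := by
    cases x with
    | nat n => exact (LL.nat_le_nat n n).2 (le_refl n)
    | seq s => exact (LL.seq_le_seq s s).2 (List.prefix_refl _)
    | top => trivial
  le_trans x y z h g := by
    cases x <;> cases y <;> cases z <;>
      first
        | trivial
        | exact (h : False).elim
        | exact (g : False).elim
        | exact (LL.nat_le_nat _ _).2
            (le_trans ((LL.nat_le_nat _ _).1 h) ((LL.nat_le_nat _ _).1 g))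
        | exact (LL.seq_le_seq _ _).2
            (List.IsPrefix.trans ((LL.seq_le_seq _ _).1 h) ((LL.seq_le_seq _ _).1 g))
  le_antisymm x y h g := by
    cases x <;> cases y <;>
      first
        | rfl
        | exact (h : False).elim
        | exact (g : False).elim
        | exact congrArg LL.nat (le_antisymm ((LL.nat_le_nat _ _).1 h) ((LL.nat_le_nat _ _).1 g))
        | exact congrArg LL.seq (Subtype.ext (List.IsPrefix.eq_of_length ((LL.seq_le_seq _ _).1 h)
            (Nat.le_antisymm (List.IsPrefix.length_le ((LL.seq_le_seq _ _).1 h))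
              (List.IsPrefix.length_le ((LL.seq_le_seq _ _).1 g)))))

/-- The underlying set of the construction: `P = ℕ × L`. -/
abbrev PP : Type := ℕ+ × LL

/-- The singleton sequence, identifying a positive natural with a length-one sequence. -/
def FinSeq.single (a : ℕ+) : FinSeq := ⟨[a], by simp⟩

/-- Append a letter to a finite sequence: `s.x`. -/
def FinSeq.snoc (s : FinSeq) (a : ℕ+) : FinSeq := ⟨s.1 ++ [a], by simp⟩

/-- The data of the construction: pairwise disjoint infinite sets `i m n ⊆ ℕ` (for `m < n`)
with strict lower bound `n`, and monotone bijections `f m n : ℕ^{<ℕ} → i m n`. -/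
structure GoodData (i : ℕ+ → ℕ+ → Set ℕ+) (f : ℕ+ → ℕ+ → FinSeq → ℕ+) : Prop where
  infinite : ∀ m n : ℕ+, m < n → (i m n).Infinite
  lower : ∀ m n : ℕ+, m < n → ∀ k ∈ i m n, n < k
  disjoint : ∀ m₁ n₁ m₂ n₂ : ℕ+, m₁ < n₁ → m₂ < n₂ → (m₁, n₁) ≠ (m₂, n₂) →
    i m₁ n₁ ∩ i m₂ n₂ = ∅
  mono : ∀ m n : ℕ+, m < n → ∀ s t : FinSeq, s.1 <+: t.1 → f m n s ≤ f m n t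
  inj : ∀ m n : ℕ+, m < n → Function.Injective (f m n)
  range : ∀ m n : ℕ+, m < n → Set.range (f m n) = i m n

/-- `(n,x) <₁ (m,y)` iff `n = m` and `x < y` in `L`. -/
def lt1 (x y : PP) : Prop := x.1 = y.1 ∧ LL.le x.2 y.2 ∧ x.2 ≠ y.2

/-- `(n,x) <₂ (m,⊤)` iff `x ∈ ℕ^{<ℕ}` and there is `k > n` with `m ∈ i(n,k)` and
`m = f_{n,k}(x)`. -/
def lt2 (i : ℕ+ → ℕ+ → Set ℕ+) (f : ℕ+ → ℕ+ → FinSeq → ℕ+) (x y : PP) : Prop :=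
  y.2 = LL.top ∧ ∃ s : FinSeq, x.2 = LL.seq s ∧
    ∃ k : ℕ+, x.1 < k ∧ y.1 ∈ i x.1 k ∧ y.1 = f x.1 k s

/-- `(n,x) <₃ (m,⊤)` iff `x ∈ ℕ` and there is `d < n` with `m ∈ i(d,n)` and
`m = f_{d,n}(x)`. -/
def lt3 (i : ℕ+ → ℕ+ → Set ℕ+) (f : ℕ+ → ℕ+ → FinSeq → ℕ+) (x y : PP) : Prop :=
  y.2 = LL.top ∧ ∃ a : ℕ+, x.2 = LL.nat a ∧
    ∃ d : ℕ+, d < x.1 ∧ y.1 ∈ i d x.1 ∧ y.1 = f d x.1 (FinSeq.single a)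

/-- `(n,x) <₄ (m,⊤)` iff `x ∈ ℕ` and there are `a < b` and `s` with `f_{a,b}(s) = n` and
`f_{a,b}(s.x) = m`. -/
def lt4 (f : ℕ+ → ℕ+ → FinSeq → ℕ+) (x y : PP) : Prop :=
  y.2 = LL.top ∧ ∃ a : ℕ+, x.2 = LL.nat a ∧ ∃ p q : ℕ+, ∃ s : FinSeq,
    p < q ∧ f p q s = x.1 ∧ f p q (FinSeq.snoc s a) = y.1

/-- The strict order `< = <₁ ∪ <₂ ∪ <₃ ∪ <₄ ∪ <₁;<₂ ∪ <₁;<₃ ∪ <₁;<₄`. -/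
def Plt (i : ℕ+ → ℕ+ → Set ℕ+) (f : ℕ+ → ℕ+ → FinSeq → ℕ+) (x y : PP) : Prop :=
  lt1 x y ∨ lt2 i f x y ∨ lt3 i f x y ∨ lt4 f x y ∨
    (∃ z, lt1 x z ∧ lt2 i f z y) ∨ (∃ z, lt1 x z ∧ lt3 i f z y) ∨ (∃ z, lt1 x z ∧ lt4 f z y)

/-- The order `≤ = < ∪ =` on `P`. -/
def Ple (i : ℕ+ → ℕ+ → Set ℕ+) (f : ℕ+ → ℕ+ → FinSeq → ℕ+) (x y : PP) : Prop :=
  Plt i f x y ∨ x = y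

/-- Upper set with respect to a relation. -/
def RelUpperSet' {α : Type*} (r : α → α → Prop) (U : Set α) : Prop :=
  ∀ ⦃a b⦄, r a b → a ∈ U → b ∈ U

/-- Directedness with respect to a relation. -/
def RelDirectedOn {α : Type*} (r : α → α → Prop) (d : Set α) : Prop :=
  ∀ x ∈ d, ∀ y ∈ d, ∃ z ∈ d, r x z ∧ r y z

/-- Least upper bound with respect to a relation. -/
def RelIsLUB {α : Type*} (r : α → α → Prop) (d : Set α) (a : α) : Prop :=
  (∀ x ∈ d, r x a) ∧ ∀ b, (∀ x ∈ d, r x b) → r a b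

/-- Scott openness with respect to a relation: an upper set inaccessible by suprema of
directed sets. -/
def RelScottOpen {α : Type*} (r : α → α → Prop) (U : Set α) : Prop :=
  RelUpperSet' r U ∧ ∀ d : Set α, d.Nonempty → RelDirectedOn r d →
    ∀ a, RelIsLUB r d a → a ∈ U → (d ∩ U).Nonempty

section MyAux

variable {i : ℕ+ → ℕ+ → Set ℕ+} {f : ℕ+ → ℕ+ → FinSeq → ℕ+}

lemma ll_le_top : ∀ x : LL, LL.le x LL.top := fun x => by cases x <;> exact trivial

lemma ll_top_le : ∀ {x : LL}, LL.le LL.top x → x = LL.top := by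
  intro x hx
  cases x with
  | top => rfl
  | nat n => exact False.elim hx
  | seq s => exact False.elim hx

lemma lt1_trans {x y z : PP} (h1 : lt1 x y) (h2 : lt1 y z) : lt1 x z := by
  obtain ⟨e1, l1, n1⟩ := h1
  obtain ⟨e2, l2, n2⟩ := h2
  refine ⟨e1.trans e2, le_trans (α := LL) l1 l2, ?_⟩
  intro he
  exact n1 (le_antisymm (α := LL) l1 (by rw [he]; exact l2))

lemma plt_src_ne_top {x y : PP} (hxy : Plt i f x y) : x.2 ≠ LL.top := by
  intro hx
  rcases hxy with h | h | h | h | ⟨z, h, h'⟩ | ⟨z, h, h'⟩ | ⟨z, h, h'⟩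
  · exact h.2.2 (by rw [hx]; exact (ll_top_le (hx ▸ h.2.1)).symm)
  · obtain ⟨s, hs, _⟩ := h.2; rw [hx] at hs; exact LL.noConfusion hs
  · obtain ⟨a, ha, _⟩ := h.2; rw [hx] at ha; exact LL.noConfusion ha
  · obtain ⟨a, ha, _⟩ := h.2; rw [hx] at ha; exact LL.noConfusion ha
  · have hz : z.2 = LL.top := ll_top_le (hx ▸ h.2.1)
    obtain ⟨s, hs, _⟩ := h'.2; rw [hz] at hs; exact LL.noConfusion hs
  · have hz : z.2 = LL.top := ll_top_le (hx ▸ h.2.1)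
    obtain ⟨a, ha, _⟩ := h'.2; rw [hz] at ha; exact LL.noConfusion ha
  · have hz : z.2 = LL.top := ll_top_le (hx ▸ h.2.1)
    obtain ⟨a, ha, _⟩ := h'.2; rw [hz] at ha; exact LL.noConfusion ha

lemma plt_cases {x y : PP} (hxy : Plt i f x y) : lt1 x y ∨ y.2 = LL.top := by
  rcases hxy with h | h | h | h | ⟨z, _, h'⟩ | ⟨z, _, h'⟩ | ⟨z, _, h'⟩
  · exact Or.inl h
  · exact Or.inr h.1
  · exact Or.inr h.1
  · exact Or.inr h.1
  · exact Or.inr h'.1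
  · exact Or.inr h'.1
  · exact Or.inr h'.1

lemma plt_trans {x y z : PP} (hxy : Plt i f x y) (hyz : Plt i f y z) : Plt i f x z := by
  have h1 : lt1 x y := by
    rcases plt_cases hxy with h | h
    · exact h
    · exact absurd h (plt_src_ne_top hyz)
  rcases hyz with h2 | h2 | h2 | h2 | ⟨w, hw1, hw2⟩ | ⟨w, hw1, hw2⟩ | ⟨w, hw1, hw2⟩
  · exact Or.inl (lt1_trans h1 h2)
  · exact Or.inr (Or.inr (Or.inr (Or.inr (Or.inl ⟨y, h1, h2⟩))))
  · exact Or.inr (Or.inr (Or.inr (Or.inr (Or.inr (Or.inl ⟨y, h1, h2⟩)))))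
  · exact Or.inr (Or.inr (Or.inr (Or.inr (Or.inr (Or.inr ⟨y, h1, h2⟩)))))
  · exact Or.inr (Or.inr (Or.inr (Or.inr (Or.inl ⟨w, lt1_trans h1 hw1, hw2⟩))))
  · exact Or.inr (Or.inr (Or.inr (Or.inr (Or.inr (Or.inl ⟨w, lt1_trans h1 hw1, hw2⟩)))))
  · exact Or.inr (Or.inr (Or.inr (Or.inr (Or.inr (Or.inr ⟨w, lt1_trans h1 hw1, hw2⟩)))))

lemma plt_asymm {x y : PP} (h1 : Plt i f x y) (h2 : Plt i f y x) : False := by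
  have hx := plt_src_ne_top h1
  have hy := plt_src_ne_top h2
  have l1 : lt1 x y := (plt_cases h1).resolve_right hy
  have l2 : lt1 y x := (plt_cases h2).resolve_right hx
  exact l1.2.2 (le_antisymm (α := LL) l1.2.1 l2.2.1)

lemma mem_i (h : GoodData i f) {p q : ℕ+} (hpq : p < q) (s : FinSeq) : f p q s ∈ i p q := by
  rw [← h.range p q hpq]; exact Set.mem_range_self s

lemma f_eq_unique (h : GoodData i f) {p q p' q' : ℕ+} {s s' : FinSeq} (hpq : p < q)
    (hpq' : p' < q') (he : f p q s = f p' q' s') : p = p' ∧ q = q' ∧ s = s' := by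
  have h1 : f p q s ∈ i p q := mem_i h hpq s
  have h2 : f p q s ∈ i p' q' := by rw [he]; exact mem_i h hpq' s'
  have hpp : (p, q) = (p', q') := by
    by_contra hc
    have hd := h.disjoint p q p' q' hpq hpq' hc
    have : f p q s ∈ i p q ∩ i p' q' := ⟨h1, h2⟩
    rw [hd] at this
    exact this
  have hp : p = p' := congrArg Prod.fst hpp
  have hq : q = q' := congrArg Prod.snd hpp
  subst hp; subst hq
  exact ⟨rfl, rfl, h.inj p q hpq he⟩

lemma ple_nat (n : ℕ+) {a b : ℕ+} (hab : a ≤ b) : Ple i f (n, LL.nat a) (n, LL.nat b) := by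
  rcases eq_or_lt_of_le hab with rfl | hlt
  · exact Or.inr rfl
  · refine Or.inl (Or.inl ⟨rfl, hab, ?_⟩)
    intro he
    injection he with he'
    exact hlt.ne he'

lemma ple_seq (n : ℕ+) {s t : FinSeq} (hst : s.1 <+: t.1) :
    Ple i f (n, LL.seq s) (n, LL.seq t) := by
  by_cases hs : s = t
  · subst hs; exact Or.inr rfl
  · refine Or.inl (Or.inl ⟨rfl, hst, ?_⟩)
    intro he
    injection he with he'
    exact hs he'

lemma nat_lub (h : GoodData i f) (n : ℕ+) :
    RelIsLUB (Ple i f) (Set.range fun a : ℕ+ => ((n, LL.nat a) : PP)) (n, LL.top) := by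
  constructor
  · rintro x ⟨a, rfl⟩
    exact Or.inl (Or.inl ⟨rfl, ll_le_top _, fun he => LL.noConfusion he⟩)
  · rintro ⟨b1, b2⟩ hb
    cases b2 with
    | nat c =>
      exfalso
      have hbc := hb (n, LL.nat (c + 1)) ⟨c + 1, rfl⟩
      rcases hbc with (h1 | h1 | h1 | h1 | ⟨z, hz1, hz2⟩ | ⟨z, hz1, hz2⟩ | ⟨z, hz1, hz2⟩) | heq
      · exact absurd ((LL.nat_le_nat _ _).1 h1.2.1)
          (not_le.mpr (PNat.lt_add_one_iff.mpr le_rfl))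
      · exact LL.noConfusion h1.1
      · exact LL.noConfusion h1.1
      · exact LL.noConfusion h1.1
      · exact LL.noConfusion hz2.1
      · exact LL.noConfusion hz2.1
      · exact LL.noConfusion hz2.1
      · have h2 : LL.nat (c + 1) = LL.nat c := congrArg Prod.snd heq
        injection h2 with h3
        exact absurd h3.le (not_le.mpr (PNat.lt_add_one_iff.mpr le_rfl))
    | seq u =>
      exfalso
      have hbc := hb (n, LL.nat 1) ⟨1, rfl⟩
      rcases hbc with (h1 | h1 | h1 | h1 | ⟨z, hz1, hz2⟩ | ⟨z, hz1, hz2⟩ | ⟨z, hz1, hz2⟩) | heq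
      · exact False.elim h1.2.1
      · exact LL.noConfusion h1.1
      · exact LL.noConfusion h1.1
      · exact LL.noConfusion h1.1
      · exact LL.noConfusion hz2.1
      · exact LL.noConfusion hz2.1
      · exact LL.noConfusion hz2.1
      · exact LL.noConfusion (congrArg Prod.snd heq)
    | top =>
      by_cases hbn : b1 = n
      · subst hbn; exact Or.inr rfl
      · exfalso
        have key : ∀ a : ℕ+, ∃ c : ℕ+, a ≤ c ∧
            ((∃ d, d < n ∧ b1 = f d n (FinSeq.single c)) ∨
              (∃ p q : ℕ+, ∃ s : FinSeq, p < q ∧ f p q s = n ∧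
                f p q (FinSeq.snoc s c) = b1)) := by
          intro a
          have hba := hb (n, LL.nat a) ⟨a, rfl⟩
          rcases hba with (h1 | h1 | h1 | h1 | ⟨z, hz1, hz2⟩ | ⟨z, hz1, hz2⟩ | ⟨z, hz1, hz2⟩) | heq
          · exact absurd h1.1.symm hbn
          · obtain ⟨s, hs, _⟩ := h1.2
            exact LL.noConfusion hs
          · obtain ⟨a', ha', d, hd, _, hbf⟩ := h1.2
            injection ha' with haa
            subst haa
            exact ⟨a, le_rfl, Or.inl ⟨d, hd, hbf⟩⟩
          · obtain ⟨a', ha', p, q, s, hpq, hfs, hfsc⟩ := h1.2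
            injection ha' with haa
            subst haa
            exact ⟨a, le_rfl, Or.inr ⟨p, q, s, hpq, hfs, hfsc⟩⟩
          · obtain ⟨s, hzs, _⟩ := hz2.2
            have hle := hz1.2.1
            rw [hzs] at hle
            exact False.elim hle
          · obtain ⟨c, hzc, d, hd, _, hbf⟩ := hz2.2
            have hle := hz1.2.1
            rw [hzc] at hle
            rw [← hz1.1] at hd hbf
            exact ⟨c, (LL.nat_le_nat _ _).1 hle, Or.inl ⟨d, hd, hbf⟩⟩
          · obtain ⟨c, hzc, p, q, s, hpq, hfs, hfsc⟩ := hz2.2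
            have hle := hz1.2.1
            rw [hzc] at hle
            rw [← hz1.1] at hfs
            exact ⟨c, (LL.nat_le_nat _ _).1 hle, Or.inr ⟨p, q, s, hpq, hfs, hfsc⟩⟩
          · exact LL.noConfusion (congrArg Prod.snd heq)
        have Quniq : ∀ c c' : ℕ+,
            ((∃ d, d < n ∧ b1 = f d n (FinSeq.single c)) ∨
              (∃ p q : ℕ+, ∃ s : FinSeq, p < q ∧ f p q s = n ∧
                f p q (FinSeq.snoc s c) = b1)) →
            ((∃ d, d < n ∧ b1 = f d n (FinSeq.single c')) ∨
              (∃ p q : ℕ+, ∃ s : FinSeq, p < q ∧ f p q s = n ∧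
                f p q (FinSeq.snoc s c') = b1)) → c = c' := by
          rintro c c' (⟨d, hd, hbf⟩ | ⟨p, q, s, hpq, hfs, hfsc⟩)
            (⟨d', hd', hbf'⟩ | ⟨p', q', s', hpq', hfs', hfsc'⟩)
          · obtain ⟨_, _, hss⟩ := f_eq_unique h hd hd' (hbf.symm.trans hbf')
            have h2 : ([c] : List ℕ+) = [c'] := congrArg Subtype.val hss
            exact (List.cons.inj h2).1
          · obtain ⟨_, _, hss⟩ := f_eq_unique h hd hpq' (hbf.symm.trans hfsc'.symm)
            have h2 : ([c] : List ℕ+) = s'.1 ++ [c'] := congrArg Subtype.val hss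
            have h3 := congrArg List.length h2
            simp at h3
            exact absurd h3 s'.2
          · obtain ⟨_, _, hss⟩ := f_eq_unique h hpq hd' (hfsc.trans hbf')
            have h2 : s.1 ++ [c] = ([c'] : List ℕ+) := congrArg Subtype.val hss
            have h3 := congrArg List.length h2
            simp at h3
            exact absurd h3 s.2
          · obtain ⟨hp, hq, hss⟩ := f_eq_unique h hpq hpq' (hfs.trans hfs'.symm)
            subst hp; subst hq; subst hss
            have hsn : FinSeq.snoc s c = FinSeq.snoc s c' :=
              h.inj p q hpq (hfsc.trans hfsc'.symm)
            have h2 : s.1 ++ [c] = s.1 ++ [c'] := congrArg Subtype.val hsn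
            have h3 := List.append_cancel_left h2
            exact (List.cons.inj h3).1
        obtain ⟨c, _, hQ⟩ := key 1
        obtain ⟨c', hcc', hQ'⟩ := key (c + 1)
        have hcc : c = c' := Quniq c c' hQ hQ'
        rw [← hcc] at hcc'
        exact absurd hcc' (not_le.mpr (PNat.lt_add_one_iff.mpr le_rfl))

lemma seq_lub (h : GoodData i f) (n : ℕ+) (G : ℕ → FinSeq)
    (hlen : ∀ k, (G k).1.length = k + 1) :
    RelIsLUB (Ple i f) (Set.range fun k : ℕ => ((n, LL.seq (G k)) : PP)) (n, LL.top) := by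
  constructor
  · rintro x ⟨k, rfl⟩
    exact Or.inl (Or.inl ⟨rfl, ll_le_top _, fun he => LL.noConfusion he⟩)
  · rintro ⟨b1, b2⟩ hb
    cases b2 with
    | nat c =>
      exfalso
      have hbc := hb (n, LL.seq (G 0)) ⟨0, rfl⟩
      rcases hbc with (h1 | h1 | h1 | h1 | ⟨z, hz1, hz2⟩ | ⟨z, hz1, hz2⟩ | ⟨z, hz1, hz2⟩) | heq
      · exact False.elim h1.2.1
      · exact LL.noConfusion h1.1
      · exact LL.noConfusion h1.1
      · exact LL.noConfusion h1.1
      · exact LL.noConfusion hz2.1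
      · exact LL.noConfusion hz2.1
      · exact LL.noConfusion hz2.1
      · exact LL.noConfusion (congrArg Prod.snd heq)
    | seq u =>
      exfalso
      have hbc := hb (n, LL.seq (G u.1.length)) ⟨u.1.length, rfl⟩
      rcases hbc with (h1 | h1 | h1 | h1 | ⟨z, hz1, hz2⟩ | ⟨z, hz1, hz2⟩ | ⟨z, hz1, hz2⟩) | heq
      · have hp : (G u.1.length).1 <+: u.1 := (LL.seq_le_seq _ _).1 h1.2.1
        have hl := hp.length_le
        rw [hlen] at hl
        omega
      · exact LL.noConfusion h1.1
      · exact LL.noConfusion h1.1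
      · exact LL.noConfusion h1.1
      · exact LL.noConfusion hz2.1
      · exact LL.noConfusion hz2.1
      · exact LL.noConfusion hz2.1
      · have h2 := congrArg Prod.snd heq
        injection h2 with h3
        have h4 := congrArg (fun t : FinSeq => t.1.length) h3
        simp only [hlen] at h4
        omega
    | top =>
      by_cases hbn : b1 = n
      · subst hbn; exact Or.inr rfl
      · exfalso
        have key : ∀ k : ℕ, ∃ t : FinSeq, ∃ q : ℕ+, n < q ∧ b1 = f n q t ∧
            (G k).1 <+: t.1 := by
          intro k
          have hbk := hb (n, LL.seq (G k)) ⟨k, rfl⟩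
          rcases hbk with (h1 | h1 | h1 | h1 | ⟨z, hz1, hz2⟩ | ⟨z, hz1, hz2⟩ | ⟨z, hz1, hz2⟩) | heq
          · exact absurd h1.1.symm hbn
          · obtain ⟨s, hs, q, hq, _, hbq⟩ := h1.2
            injection hs with hs'
            subst hs'
            exact ⟨G k, q, hq, hbq, List.prefix_refl _⟩
          · obtain ⟨a, ha, _⟩ := h1.2
            exact LL.noConfusion ha
          · obtain ⟨a, ha, _⟩ := h1.2
            exact LL.noConfusion ha
          · obtain ⟨t, hzt, q, hq, _, hbq⟩ := hz2.2
            have hle := hz1.2.1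
            rw [hzt] at hle
            rw [← hz1.1] at hq hbq
            exact ⟨t, q, hq, hbq, (LL.seq_le_seq _ _).1 hle⟩
          · obtain ⟨a, hza, _⟩ := hz2.2
            have hle := hz1.2.1
            rw [hza] at hle
            exact False.elim hle
          · obtain ⟨a, hza, _⟩ := hz2.2
            have hle := hz1.2.1
            rw [hza] at hle
            exact False.elim hle
          · exact LL.noConfusion (congrArg Prod.snd heq)
        obtain ⟨t, q, hq, hbq, _⟩ := key 0
        obtain ⟨t', q', hq', hbq', hpre'⟩ := key t.1.length
        obtain ⟨_, hqq, htt⟩ := f_eq_unique h hq' hq (hbq'.symm.trans hbq)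
        subst htt
        have hl := hpre'.length_le
        rw [hlen] at hl
        omega

lemma natStep (h : GoodData i f) {U : Set PP} (hU : RelScottOpen (Ple i f) U) {n : ℕ+}
    (hn : ((n, LL.top) : PP) ∈ U) : ∃ a₀ : ℕ+, ∀ a, a₀ ≤ a → ((n, LL.nat a) : PP) ∈ U := by
  have hd : RelDirectedOn (Ple i f) (Set.range fun a : ℕ+ => ((n, LL.nat a) : PP)) := by
    rintro x ⟨a, rfl⟩ y ⟨b, rfl⟩
    exact ⟨(n, LL.nat (max a b)), ⟨max a b, rfl⟩, ple_nat n (le_max_left a b),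
      ple_nat n (le_max_right a b)⟩
  obtain ⟨x, ⟨a₀, rfl⟩, hxU⟩ := hU.2 (Set.range fun a : ℕ+ => ((n, LL.nat a) : PP)) ⟨(n, LL.nat 1), ⟨1, rfl⟩⟩ hd _ (nat_lub h n) hn
  exact ⟨a₀, fun a ha => hU.1 (ple_nat n ha) hxU⟩

lemma seqStep (h : GoodData i f) {U : Set PP} (hU : RelScottOpen (Ple i f) U) {n : ℕ+}
    (hn : ((n, LL.top) : PP) ∈ U) (G : ℕ → FinSeq)
    (hmono : ∀ k, (G k).1 <+: (G (k + 1)).1) (hlen : ∀ k, (G k).1.length = k + 1) :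
    ∃ k, ((n, LL.seq (G k)) : PP) ∈ U := by
  have hpref : ∀ j k : ℕ, j ≤ k → (G j).1 <+: (G k).1 := by
    intro j k hjk
    induction hjk with
    | refl => exact List.prefix_refl _
    | step _ ih => exact ih.trans (hmono _)
  have hd : RelDirectedOn (Ple i f) (Set.range fun k : ℕ => ((n, LL.seq (G k)) : PP)) := by
    rintro x ⟨j, rfl⟩ y ⟨k, rfl⟩
    exact ⟨(n, LL.seq (G (max j k))), ⟨max j k, rfl⟩,
      ple_seq n (hpref _ _ (le_max_left _ _)), ple_seq n (hpref _ _ (le_max_right _ _))⟩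
  obtain ⟨x, ⟨k, rfl⟩, hxU⟩ := hU.2 (Set.range fun k : ℕ => ((n, LL.seq (G k)) : PP)) ⟨(n, LL.seq (G 0)), ⟨0, rfl⟩⟩ hd _ (seq_lub h n G hlen) hn
  exact ⟨k, hxU⟩

lemma ruleR2 (h : GoodData i f) {U : Set PP} (hU : RelScottOpen (Ple i f) U) {n q : ℕ+}
    {s : FinSeq} (hmem : ((n, LL.seq s) : PP) ∈ U) (hq : n < q) :
    ((f n q s, LL.top) : PP) ∈ U :=
  hU.1 (Or.inl (Or.inr (Or.inl ⟨rfl, s, rfl, q, hq, mem_i h hq s, rfl⟩))) hmem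

lemma ruleR3 (h : GoodData i f) {U : Set PP} (hU : RelScottOpen (Ple i f) U) {n a d : ℕ+}
    (hmem : ((n, LL.nat a) : PP) ∈ U) (hd : d < n) :
    ((f d n (FinSeq.single a), LL.top) : PP) ∈ U :=
  hU.1 (Or.inl (Or.inr (Or.inr (Or.inl ⟨rfl, a, rfl, d, hd, mem_i h hd _, rfl⟩)))) hmem

lemma ruleR4 {U : Set PP} (hU : RelScottOpen (Ple i f) U) {n a p q : ℕ+} {s : FinSeq}
    (hmem : ((n, LL.nat a) : PP) ∈ U) (hpq : p < q) (hfs : f p q s = n) :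
    ((f p q (FinSeq.snoc s a), LL.top) : PP) ∈ U :=
  hU.1 (Or.inl (Or.inr (Or.inr (Or.inr (Or.inl ⟨rfl, a, rfl, p, q, s, hpq, hfs, rfl⟩))))) hmem

lemma top_mem {U : Set PP} (hU : RelScottOpen (Ple i f) U) {x : PP} (hx : x ∈ U) :
    ((x.1, LL.top) : PP) ∈ U := by
  by_cases hxt : x.2 = LL.top
  · have hxx : x = (x.1, LL.top) := Prod.ext rfl hxt
    rwa [← hxx]
  · have hr : Ple i f x (x.1, LL.top) := Or.inl (Or.inl ⟨rfl, ll_le_top _, hxt⟩)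
    exact hU.1 hr hx

end MyAux

/-- The relation `≤` defined from the data of the construction is a partial order on
`P = ℕ × L`, and `P` is an irreducible subset of its Scott space: any two nonempty
Scott open subsets of `P` intersect. -/
theorem Ple_partialOrder_and_irreducible (i : ℕ+ → ℕ+ → Set ℕ+)
    (f : ℕ+ → ℕ+ → FinSeq → ℕ+) (h : GoodData i f) :
    Reflexive (Ple i f) ∧ Transitive (Ple i f) ∧ AntiSymmetric (Ple i f) ∧
    (∀ U V : Set PP, RelScottOpen (Ple i f) U → RelScottOpen (Ple i f) V →
      U.Nonempty → V.Nonempty → (U ∩ V).Nonempty) := by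
  refine ⟨fun x => Or.inr rfl, ?_, ?_, ?_⟩
  · rintro x y z (hxy | rfl) (hyz | rfl)
    · exact Or.inl (plt_trans hxy hyz)
    · exact Or.inl hxy
    · exact Or.inl hyz
    · exact Or.inr rfl
  · rintro x y (hxy | rfl) (hyx | hyx)
    · exact (plt_asymm hxy hyx).elim
    · exact hyx.symm
    · rfl
    · rfl
  · rintro U V hU hV ⟨u, huU⟩ ⟨v, hvV⟩
    have hmU : ((u.1, LL.top) : PP) ∈ U := top_mem hU huU
    have hm'V : ((v.1, LL.top) : PP) ∈ V := top_mem hV hvV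
    -- a constant prefix chain of sequences
    let G0 : ℕ → FinSeq := fun k => ⟨List.replicate (k + 1) 1, by simp⟩
    have hG0len : ∀ k, (G0 k).1.length = k + 1 := fun k => List.length_replicate
    have hG0mono : ∀ k, (G0 k).1 <+: (G0 (k + 1)).1 := by
      intro k
      exact ⟨[1], (List.replicate_succ' (n := k + 1) (a := 1)).symm⟩
    obtain ⟨k₀, hk₀⟩ := seqStep h hV hm'V G0 hG0mono hG0len
    set q0 : ℕ+ := max u.1 v.1 + 1 with hq0
    have hq0m : u.1 < q0 := lt_of_le_of_lt (le_max_left _ _) (PNat.lt_add_one_iff.mpr le_rfl)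
    have hq0m' : v.1 < q0 := lt_of_le_of_lt (le_max_right _ _) (PNat.lt_add_one_iff.mpr le_rfl)
    set N' : ℕ+ := f v.1 q0 (G0 k₀) with hN'def
    have hN'V : ((N', LL.top) : PP) ∈ V := ruleR2 h hV hk₀ hq0m'
    have hq0N' : q0 < N' := h.lower v.1 q0 hq0m' N' (mem_i h hq0m' _)
    have hmN' : u.1 < N' := lt_trans hq0m hq0N'
    obtain ⟨a₀, ha₀⟩ := natStep h hV hN'V
    have hroot : ((f u.1 N' (FinSeq.single a₀), LL.top) : PP) ∈ V :=
      ruleR3 h hV (ha₀ a₀ le_rfl) hmN'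
    have hstep : ∀ g : FinSeq, ((f u.1 N' g, LL.top) : PP) ∈ V →
        ∃ c : ℕ+, ((f u.1 N' (FinSeq.snoc g c), LL.top) : PP) ∈ V := by
      intro g hg
      obtain ⟨c₀, hc₀⟩ := natStep h hV hg
      exact ⟨c₀, ruleR4 hV (hc₀ c₀ le_rfl) hmN' rfl⟩
    choose st hst using hstep
    let G : ℕ → {g : FinSeq // ((f u.1 N' g, LL.top) : PP) ∈ V} := fun k =>
      Nat.rec ⟨FinSeq.single a₀, hroot⟩
        (fun _ ih => ⟨FinSeq.snoc ih.1 (st ih.1 ih.2), hst ih.1 ih.2⟩) k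
    have hGlen : ∀ k, ((G k).1).1.length = k + 1 := by
      intro k
      induction k with
      | zero => rfl
      | succ k ih =>
        show (FinSeq.snoc (G k).1 _).1.length = k + 1 + 1
        simp [FinSeq.snoc, ih]
    have hGmono : ∀ k, ((G k).1).1 <+: ((G (k + 1)).1).1 := by
      intro k
      show ((G k).1).1 <+: (FinSeq.snoc (G k).1 _).1
      exact ⟨_, rfl⟩
    obtain ⟨k, hkU⟩ := seqStep h hU hmU (fun k => (G k).1) hGmono hGlen
    exact ⟨(f u.1 N' ((G k).1), LL.top), ruleR2 h hU hkU hmN', (G k).2⟩
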